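/- arXiv:1001.2500 — 3 statements merged into one kernel-verified Lean document; each statement's English description precedes it below -/
import Mathlib

section
/- Define polynomials q_s = Σ_{j=0}^{s} C(s+j, s-j) t^{2j} in ℤ[t]. Then for every n ≥ 1, Σ_{s=0}^{n-1} (-1)^{n-1-s} C(n-1, s) q_s = p_{n-1}, where p is the sequence defined by p_0 = 1, p_1 = t^2, p_{s+2} = t^2 (p_s + p_{s+1}). -/
open Polynomial Finset fwdDiff

private lemma key_choose (n k : ℕ) :
    (n + 2).choose (k + 2) + n.choose (k + 2) = n.choose k + 2 * ((n + 1).choose (k + 2)) := by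
  have h1 : (n + 2).choose (k + 2) = (n + 1).choose (k + 1) + (n + 1).choose (k + 2) :=
    Nat.choose_succ_succ _ _
  have h2 : (n + 1).choose (k + 1) = n.choose k + n.choose (k + 1) := Nat.choose_succ_succ _ _
  have h3 : (n + 1).choose (k + 2) = n.choose (k + 1) + n.choose (k + 2) := Nat.choose_succ_succ _ _
  omega

private lemma key_choose' (s j : ℕ) :
    ((s + 3 + j).choose (2 * j + 2) : ℤ) + (s + 1 + j).choose (2 * j + 2) =
      (s + 1 + j).choose (2 * j) + 2 * (s + 2 + j).choose (2 * j + 2) := by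
  have e1 : s + 3 + j = s + 1 + j + 2 := by ring
  have e2 : s + 2 + j = s + 1 + j + 1 := by ring
  rw [e1, e2]
  exact_mod_cast key_choose (s + 1 + j) (2 * j)

private lemma qext (q : ℕ → Polynomial ℤ)
    (hq : ∀ s, q s = ∑ j ∈ Finset.range (s + 1),
      C (((s + j).choose (s - j) : ℤ)) * X ^ (2 * j))
    (s N : ℕ) (hN : s + 1 ≤ N) :
    q s = ∑ j ∈ Finset.range N, C (((s + j).choose (2 * j) : ℤ)) * X ^ (2 * j) := by
  rw [hq s]
  have h1 : ∀ j ∈ Finset.range (s + 1),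
      C (((s + j).choose (s - j) : ℤ)) * X ^ (2 * j)
        = C (((s + j).choose (2 * j) : ℤ)) * X ^ (2 * j) := by
    intro j hj
    rw [Finset.mem_range] at hj
    have : (s + j) - (2 * j) = s - j := by omega
    rw [← this, Nat.choose_symm (by omega)]
  rw [Finset.sum_congr rfl h1]
  apply Finset.sum_subset (Finset.range_subset_range.2 hN)
  intro j _ hjs
  rw [Finset.mem_range] at hjs
  rw [Nat.choose_eq_zero_of_lt (by omega)]
  simp

private lemma qrec (q : ℕ → Polynomial ℤ)
    (hq : ∀ s, q s = ∑ j ∈ Finset.range (s + 1),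
      C (((s + j).choose (s - j) : ℤ)) * X ^ (2 * j)) (s : ℕ) :
    q (s + 2) + q s = X ^ 2 * q (s + 1) + 2 * q (s + 1) := by
  have hL : q (s + 2) + q s
      = (∑ j ∈ Finset.range (s + 2),
          (C (((s + 3 + j).choose (2 * j + 2) : ℤ))
            + C (((s + 1 + j).choose (2 * j + 2) : ℤ))) * X ^ (2 * j + 2)) + 2 := by
    rw [qext q hq (s + 2) (s + 3) (by omega), qext q hq s (s + 3) (by omega),
      ← Finset.sum_add_distrib, Finset.sum_range_succ']
    congr 1
    · apply Finset.sum_congr rfl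
      intro j _
      have e1 : s + 2 + (j + 1) = s + 3 + j := by ring
      have e2 : s + (j + 1) = s + 1 + j := by ring
      have e4 : 2 * (j + 1) = 2 * j + 2 := by ring
      rw [e1, e2, e4]
      ring
    · norm_num
  have hX2q : X ^ 2 * q (s + 1)
      = ∑ j ∈ Finset.range (s + 2), C (((s + 1 + j).choose (2 * j) : ℤ)) * X ^ (2 * j + 2) := by
    rw [qext q hq (s + 1) (s + 2) (by omega), Finset.mul_sum]
    apply Finset.sum_congr rfl
    intro j _
    ring
  have h2q : (2 : Polynomial ℤ) * q (s + 1)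
      = (∑ j ∈ Finset.range (s + 2),
          2 * C (((s + 2 + j).choose (2 * j + 2) : ℤ)) * X ^ (2 * j + 2)) + 2 := by
    rw [qext q hq (s + 1) (s + 3) (by omega), Finset.mul_sum, Finset.sum_range_succ']
    congr 1
    · apply Finset.sum_congr rfl
      intro j _
      have e3 : s + 1 + (j + 1) = s + 2 + j := by ring
      have e4 : 2 * (j + 1) = 2 * j + 2 := by ring
      rw [e3, e4]
      ring
    · norm_num
  rw [hL, hX2q, h2q, ← add_assoc]
  congr 1
  rw [← Finset.sum_add_distrib]
  apply Finset.sum_congr rfl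
  intro j _
  have hc : (C (((s + 3 + j).choose (2 * j + 2) : ℤ))
        + C (((s + 1 + j).choose (2 * j + 2) : ℤ)) : Polynomial ℤ)
      = C (((s + 1 + j).choose (2 * j) : ℤ)) + 2 * C (((s + 2 + j).choose (2 * j + 2) : ℤ)) := by
    rw [← C_add, key_choose' s j]
    simp only [map_add, map_mul, map_ofNat]
  calc (C (((s + 3 + j).choose (2 * j + 2) : ℤ))
        + C (((s + 1 + j).choose (2 * j + 2) : ℤ))) * X ^ (2 * j + 2)
      = (C (((s + 1 + j).choose (2 * j) : ℤ))
          + 2 * C (((s + 2 + j).choose (2 * j + 2) : ℤ))) * X ^ (2 * j + 2) := by rw [hc]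
    _ = C (((s + 1 + j).choose (2 * j) : ℤ)) * X ^ (2 * j + 2)
          + 2 * C (((s + 2 + j).choose (2 * j + 2) : ℤ)) * X ^ (2 * j + 2) := by ring

private lemma shift_iter (f : ℕ → Polynomial ℤ) :
    ∀ k, (fwdDiff (1 : ℕ))^[k] (fun s => f (s + 1)) = fun s => (fwdDiff (1 : ℕ))^[k] f (s + 1) := by
  intro k
  induction k generalizing f with
  | zero => rfl
  | succ k ih =>
    rw [Function.iterate_succ_apply, Function.iterate_succ_apply]
    have h : fwdDiff (1 : ℕ) (fun s => f (s + 1)) = fun s => fwdDiff (1 : ℕ) f (s + 1) := rfl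
    rw [h, ih]

theorem stmt_1 (p q : ℕ → Polynomial ℤ)
    (hp0 : p 0 = 1) (hp1 : p 1 = X ^ 2)
    (hrec : ∀ s, p (s + 2) = X ^ 2 * (p s + p (s + 1)))
    (hq : ∀ s, q s = ∑ j ∈ Finset.range (s + 1),
      C (((s + j).choose (s - j) : ℤ)) * X ^ (2 * j))
    (n : ℕ) (hn : 1 ≤ n) :
    ∑ s ∈ Finset.range n, (-1 : Polynomial ℤ) ^ (n - 1 - s) *
      C (((n - 1).choose s : ℤ)) * q s = p (n - 1) := by
  obtain ⟨m, rfl⟩ : ∃ m, n = m + 1 := ⟨n - 1, by omega⟩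
  simp only [Nat.add_sub_cancel]
  have hq0 : q 0 = 1 := by simpa using hq 0
  have hq1 : q 1 = 1 + X ^ 2 := by
    rw [hq 1, Finset.sum_range_succ, Finset.sum_range_one]
    norm_num
  have main : ∀ k, (fwdDiff (1 : ℕ))^[k] q 0 = p k
      ∧ (fwdDiff (1 : ℕ))^[k + 1] q 0 = p (k + 1) := by
    intro k
    induction k with
    | zero =>
      constructor
      · simpa [hp0] using hq0
      · rw [Function.iterate_one]
        show q (0 + 1) - q 0 = p 1
        rw [hq0, hq1, hp1]
        ring
    | succ k ih =>
      refine ⟨ih.2, ?_⟩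
      have hΔ2 : (fwdDiff (1 : ℕ))^[2] q = (X ^ 2 : Polynomial ℤ) • (fun s => q (s + 1)) := by
        funext s
        show (q (s + 1 + 1) - q (s + 1)) - (q (s + 1) - q s) = X ^ 2 * q (s + 1)
        linear_combination qrec q hq s
      have step : (fwdDiff (1 : ℕ))^[k + 1 + 1] q 0
          = X ^ 2 * ((fwdDiff (1 : ℕ))^[k] q 1) := by
        have e : k + 1 + 1 = k + 2 := rfl
        rw [e, Function.iterate_add_apply (fwdDiff (1 : ℕ)) k 2 q, hΔ2,
          fwdDiff_iter_const_smul, Pi.smul_apply, shift_iter q k]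
        simp [smul_eq_mul]
      have h1 : (fwdDiff (1 : ℕ))^[k] q 1
          = (fwdDiff (1 : ℕ))^[k] q 0 + (fwdDiff (1 : ℕ))^[k + 1] q 0 := by
        rw [Function.iterate_succ_apply' (fwdDiff (1 : ℕ)) k q]
        show _ = (fwdDiff (1 : ℕ))^[k] q 0
          + ((fwdDiff (1 : ℕ))^[k] q (0 + 1) - (fwdDiff (1 : ℕ))^[k] q 0)
        ring_nf
      rw [step, h1, ih.1, ih.2, ← hrec k]
  have formula := fwdDiff_iter_eq_sum_shift (1 : ℕ) q m 0
  have key : ∑ s ∈ Finset.range (m + 1), (-1 : Polynomial ℤ) ^ (m - s) *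
      C ((m.choose s : ℤ)) * q s = (fwdDiff (1 : ℕ))^[m] q 0 := by
    rw [formula]
    apply Finset.sum_congr rfl
    intro s _
    have h0 : (0 : ℕ) + s • (1 : ℕ) = s := by simp
    rw [h0, zsmul_eq_mul]
    push_cast [Polynomial.C_eq_intCast]
    simp only [Polynomial.C_eq_natCast]
  rw [key, (main m).1]
end

section
/- For all integers n ≥ 1 and 0 ≤ j ≤ n-1, Σ_{s=j}^{n-1} (-1)^s C(n-1, s) C(s+j, 2j) = (-1)^{n-1} C(j, 2j-n+1). -/
lemma aux (b : ℕ) : ∀ m r : ℕ,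
    ∑ s ∈ Finset.range (m + 1), (-1 : ℤ) ^ s * (m.choose s : ℤ) * ((s + r).choose b : ℤ)
      = (-1 : ℤ) ^ m * (if m ≤ b then (r.choose (b - m) : ℤ) else 0) := by
  intro m
  induction m with
  | zero => intro r; simp
  | succ m ih =>
    intro r
    have hT : ∑ i ∈ Finset.range (m + 1),
        (-1 : ℤ) ^ (i + 1) * (m.choose (i + 1) : ℤ) * (((i + 1) + r).choose b : ℤ)
        = (∑ s ∈ Finset.range (m + 1), (-1 : ℤ) ^ s * (m.choose s : ℤ) * ((s + r).choose b : ℤ))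
          - (r.choose b : ℤ) := by
      have h1 : ∑ s ∈ Finset.range (m + 2), (-1 : ℤ) ^ s * (m.choose s : ℤ) * ((s + r).choose b : ℤ)
          = ∑ s ∈ Finset.range (m + 1), (-1 : ℤ) ^ s * (m.choose s : ℤ) * ((s + r).choose b : ℤ) := by
        rw [Finset.sum_range_succ]
        simp [Nat.choose_succ_self]
      have h2 : ∑ s ∈ Finset.range (m + 2), (-1 : ℤ) ^ s * (m.choose s : ℤ) * ((s + r).choose b : ℤ)
          = (∑ i ∈ Finset.range (m + 1),
              (-1 : ℤ) ^ (i + 1) * (m.choose (i + 1) : ℤ) * (((i + 1) + r).choose b : ℤ))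
            + (r.choose b : ℤ) := by
        rw [Finset.sum_range_succ' _ (m + 1)]
        simp
      linarith [h1, h2]
    have key : ∑ s ∈ Finset.range (m + 2), (-1 : ℤ) ^ s * ((m + 1).choose s : ℤ) * ((s + r).choose b : ℤ)
        = (∑ s ∈ Finset.range (m + 1), (-1 : ℤ) ^ s * (m.choose s : ℤ) * ((s + r).choose b : ℤ))
          - ∑ s ∈ Finset.range (m + 1), (-1 : ℤ) ^ s * (m.choose s : ℤ) * ((s + (r + 1)).choose b : ℤ) := by
      rw [Finset.sum_range_succ' _ (m + 1)]
      have expand : ∀ i ∈ Finset.range (m + 1),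
          (-1 : ℤ) ^ (i + 1) * ((m + 1).choose (i + 1) : ℤ) * (((i + 1) + r).choose b : ℤ)
          = (-((-1 : ℤ) ^ i * (m.choose i : ℤ) * ((i + (r + 1)).choose b : ℤ)))
            + ((-1 : ℤ) ^ (i + 1) * (m.choose (i + 1) : ℤ) * (((i + 1) + r).choose b : ℤ)) := by
        intro i _
        rw [Nat.choose_succ_succ]
        push_cast
        have : i + 1 + r = i + (r + 1) := by ring
        rw [this]
        ring
      rw [Finset.sum_congr rfl expand, Finset.sum_add_distrib, hT,
        Finset.sum_neg_distrib]
      simp only [Nat.choose_zero_right, Nat.cast_one, zero_add, one_mul]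
      ring
    rw [key, ih r, ih (r + 1)]
    by_cases h1 : m + 1 ≤ b
    · have h0 : m ≤ b := Nat.le_of_succ_le h1
      rw [if_pos h0, if_pos h0, if_pos h1]
      have hbm : b - m = (b - (m + 1)) + 1 := by omega
      rw [hbm, Nat.choose_succ_succ]
      push_cast
      ring
    · rw [if_neg h1]
      by_cases h0 : m ≤ b
      · have hb : b = m := by omega
        subst hb
        simp
      · simp [h0]

theorem stmt_2 (n j : ℕ) (hn : 1 ≤ n) (hj : j ≤ n - 1) :
    ∑ s ∈ Finset.Icc j (n - 1),
      (-1 : ℤ) ^ s * ((n - 1).choose s : ℤ) * ((s + j).choose (2 * j) : ℤ) =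
    (-1 : ℤ) ^ (n - 1) *
      (if n - 1 ≤ 2 * j then (j.choose (2 * j - (n - 1)) : ℤ) else 0) := by
  have hext : ∑ s ∈ Finset.Icc j (n - 1),
      (-1 : ℤ) ^ s * ((n - 1).choose s : ℤ) * ((s + j).choose (2 * j) : ℤ)
      = ∑ s ∈ Finset.range ((n - 1) + 1),
      (-1 : ℤ) ^ s * ((n - 1).choose s : ℤ) * ((s + j).choose (2 * j) : ℤ) := by
    apply Finset.sum_subset
    · intro x hx
      simp only [Finset.mem_Icc] at hx
      simp only [Finset.mem_range]
      omega
    · intro x hx hx'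
      simp only [Finset.mem_Icc, Finset.mem_range, not_and, not_le] at hx hx'
      have : x < j := by omega
      have : x + j < 2 * j := by omega
      rw [Nat.choose_eq_zero_of_lt this]
      push_cast
      ring
  rw [hext, aux (2 * j) (n - 1) j]
end

section
/- In the free group F on generators x and y, consider the Magnus expansion μ into the ring of formal power series in non-commuting variables s, t defined by x ↦ 1+s, y ↦ 1+t, x^{-1} ↦ 1 - s + s^2 - ..., y^{-1} ↦ 1 - t + t^2 - .... Then μ is an injective group homomorphism from F into the group of units of ℤ⟨⟨s,t⟩⟩. -/
/-- The free associative algebra ℤ⟨s,t⟩ on two non-commuting variables,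
realized as the monoid algebra of the free monoid on two generators. -/
noncomputable abbrev FreeAlg2 : Type := MonoidAlgebra ℤ (FreeMonoid (Fin 2))

/-- The ring ℤ⟨⟨s,t⟩⟩ of formal power series in two non-commuting variables,
realized (via the grading by total degree) inside power series with
coefficients in ℤ⟨s,t⟩: the generator `s` corresponds to `gen 0` and `t`
to `gen 1`, each placed in degree one. -/
noncomputable abbrev NCSeries2 : Type := PowerSeries FreeAlg2

/-- The degree-one series corresponding to the non-commuting variable `i`. -/
noncomputable def gen (i : Fin 2) : NCSeries2 :=
  PowerSeries.C (R := FreeAlg2) (MonoidAlgebra.single (FreeMonoid.of i) (1 : ℤ)) *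
    PowerSeries.X

namespace MagnusProof

open PowerSeries List

noncomputable abbrev mon (w : FreeMonoid (Fin 2)) : FreeAlg2 := MonoidAlgebra.single w 1

noncomputable abbrev cf (n : ℕ) (f : NCSeries2) : FreeAlg2 := PowerSeries.coeff n f

lemma mon_mul (w v : FreeMonoid (Fin 2)) : mon w * mon v = mon (w * v) := by
  simp [mon, MonoidAlgebra.single_mul_single]

lemma mon_one : mon 1 = (1 : FreeAlg2) := rfl

lemma cf_gen (i : Fin 2) (n : ℕ) :
    cf n (gen i) = if n = 1 then mon (FreeMonoid.of i) else 0 := by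
  rw [cf, gen, PowerSeries.coeff_C_mul, PowerSeries.coeff_X]
  split <;> simp [mon]

lemma cf_one (n : ℕ) : cf n (1 : NCSeries2) = if n = 0 then 1 else 0 := by
  simp [cf, PowerSeries.coeff_one]

/-- The key coefficient structure property for powers of `1 + gen i`. -/
def CP (i : Fin 2) (e : ℤ) (f : NCSeries2) : Prop :=
  cf 0 f = 1 ∧ cf 1 f = e • mon (FreeMonoid.of i) ∧
    ∀ n : ℕ, ∃ c : ℤ, cf n f = c • mon (FreeMonoid.of i ^ n)

lemma antidiagonal_one : (Finset.HasAntidiagonal.antidiagonal (1 : ℕ)) = {(0, 1), (1, 0)} := by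
  decide

lemma CP_mul {i : Fin 2} {e e' : ℤ} {f g : NCSeries2} (hf : CP i e f) (hg : CP i e' g) :
    CP i (e + e') (f * g) := by
  obtain ⟨f0, f1, fn⟩ := hf
  obtain ⟨g0, g1, gn⟩ := hg
  choose γ hγ using fn
  choose δ hδ using gn
  refine ⟨?_, ?_, ?_⟩
  · rw [cf, PowerSeries.coeff_mul]
    simp [Finset.Nat.antidiagonal_zero, f0, g0]
  · simp only [cf] at f0 f1 g0 g1 ⊢
    rw [PowerSeries.coeff_mul, antidiagonal_one]
    rw [Finset.sum_insert (by decide), Finset.sum_singleton]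
    rw [f0, f1, g0, g1, one_mul, mul_one, ← add_smul, add_comm e' e]
  · intro n
    refine ⟨∑ p ∈ Finset.HasAntidiagonal.antidiagonal n, γ p.1 * δ p.2, ?_⟩
    simp only [cf] at hγ hδ ⊢
    rw [PowerSeries.coeff_mul, Finset.sum_smul]
    refine Finset.sum_congr rfl fun p hp => ?_
    rw [Finset.HasAntidiagonal.mem_antidiagonal] at hp
    rw [hγ, hδ, smul_mul_smul_comm, mon_mul, ← pow_add, hp]

lemma CP_one (i : Fin 2) : CP i 0 (1 : NCSeries2) := by
  refine ⟨by simp [cf_one], by simp [cf_one], fun n => ?_⟩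
  refine ⟨if n = 0 then 1 else 0, ?_⟩
  rcases n with _ | n <;> simp [cf_one, ← mon_one]

lemma cf_gen_mul_zero (i : Fin 2) (f : NCSeries2) : cf 0 (gen i * f) = 0 := by
  rw [cf, PowerSeries.coeff_mul]
  simp [Finset.Nat.antidiagonal_zero, show cf 0 (gen i) = 0 by simp [cf_gen]]

lemma cf_gen_mul_succ (i : Fin 2) (f : NCSeries2) (n : ℕ) :
    cf (n + 1) (gen i * f) = mon (FreeMonoid.of i) * cf n f := by
  rw [cf, PowerSeries.coeff_mul]
  rw [Finset.sum_eq_single_of_mem (1, n) (by rw [Finset.HasAntidiagonal.mem_antidiagonal]; omega)]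
  · rw [show ((1:ℕ), n).1 = 1 from rfl, show ((1:ℕ), n).2 = n from rfl]
    rw [show PowerSeries.coeff (R := FreeAlg2) 1 (gen i) = cf 1 (gen i) from rfl, cf_gen]
    simp [cf]
  · rintro ⟨a, b⟩ hab hne
    rw [Finset.HasAntidiagonal.mem_antidiagonal] at hab
    rcases eq_or_ne a 1 with rfl | ha
    · exact absurd (by omega : b = n) (fun h => hne (by simp [h]))
    · rw [show PowerSeries.coeff (R := FreeAlg2) a (gen i) = cf a (gen i) from rfl, cf_gen,
        if_neg ha, zero_mul]

lemma CP_u (u : Fin 2 → NCSeries2ˣ) (hu : ∀ i, ((u i : NCSeries2)) = 1 + gen i)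
    (i : Fin 2) : CP i 1 ((u i : NCSeries2)) := by
  rw [hu]
  refine ⟨?_, ?_, fun n => ?_⟩
  · simp [cf_one, cf_gen]
  · simp [cf_one, cf_gen]
  · refine ⟨if n = 0 then 1 else if n = 1 then 1 else 0, ?_⟩
    rcases n with _ | _ | n <;> simp [cf_one, cf_gen, ← mon_one]

lemma CP_uinv (u : Fin 2 → NCSeries2ˣ) (hu : ∀ i, ((u i : NCSeries2)) = 1 + gen i)
    (i : Fin 2) : CP i (-1) (((u i)⁻¹ : NCSeries2ˣ) : NCSeries2) := by
  set v : NCSeries2 := (((u i)⁻¹ : NCSeries2ˣ) : NCSeries2) with hv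
  have hmul : (1 + gen i) * v = 1 := by
    rw [← hu]
    rw [hv, ← Units.val_mul, mul_inv_cancel, Units.val_one]
  have hexp : ∀ n : ℕ, cf n v + cf n (gen i * v) = cf n 1 := by
    intro n
    rw [cf, cf, cf, ← map_add]
    congr 1
    rw [← hmul, add_mul, one_mul]
  have h0 : cf 0 v = 1 := by
    have := hexp 0
    rwa [cf_gen_mul_zero, add_zero, cf_one, if_pos rfl] at this
  have hrec : ∀ n : ℕ, cf (n + 1) v = -(mon (FreeMonoid.of i) * cf n v) := by
    intro n
    have := hexp (n + 1)
    rw [cf_gen_mul_succ, cf_one, if_neg (Nat.succ_ne_zero n)] at this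
    exact eq_neg_of_add_eq_zero_left this
  have hform : ∀ n : ℕ, cf n v = ((-1 : ℤ) ^ n) • mon (FreeMonoid.of i ^ n) := by
    intro n
    induction n with
    | zero => simp [h0, ← mon_one]
    | succ n ih =>
      rw [hrec n, ih, mul_smul_comm, mon_mul, ← pow_succ', ← neg_smul]
      rw [pow_succ (-1 : ℤ) n]
      ring_nf
  refine ⟨h0, ?_, fun n => ⟨(-1) ^ n, hform n⟩⟩
  rw [hform 1]
  simp

lemma CP_zpow (u : Fin 2 → NCSeries2ˣ) (hu : ∀ i, ((u i : NCSeries2)) = 1 + gen i)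
    (i : Fin 2) (e : ℤ) : CP i e ((u i ^ e : NCSeries2ˣ) : NCSeries2) := by
  induction e using Int.induction_on with
  | zero => rw [zpow_zero, Units.val_one]; exact CP_one i
  | succ n ih =>
    rw [zpow_add_one, Units.val_mul]
    exact CP_mul ih (CP_u u hu i)
  | pred n ih =>
    have h := CP_mul ih (CP_uinv u hu i)
    rw [← Units.val_mul, ← zpow_sub_one] at h
    rwa [← sub_eq_add_neg] at h

noncomputable def prodZ (u : Fin 2 → NCSeries2ˣ) (L : List (Fin 2 × ℤ)) : NCSeries2ˣ :=
  (L.map fun p => u p.1 ^ p.2).prod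

lemma prodZ_nil (u : Fin 2 → NCSeries2ˣ) : prodZ u [] = 1 := by simp [prodZ]

lemma prodZ_cons (u : Fin 2 → NCSeries2ˣ) (p : Fin 2 × ℤ) (L : List (Fin 2 × ℤ)) :
    prodZ u (p :: L) = u p.1 ^ p.2 * prodZ u L := by simp [prodZ]

def blockProd (L : List (Fin 2 × ℤ)) (as : List ℕ) : FreeMonoid (Fin 2) :=
  (List.zipWith (fun p a => FreeMonoid.of p.1 ^ a) L as).prod

lemma blockProd_nil : blockProd [] [] = 1 := rfl

lemma blockProd_cons (p : Fin 2 × ℤ) (L : List (Fin 2 × ℤ)) (a : ℕ) (as : List ℕ) :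
    blockProd (p :: L) (a :: as) = FreeMonoid.of p.1 ^ a * blockProd L as := by
  simp [blockProd]

def wordOf : List (Fin 2 × ℤ) → FreeMonoid (Fin 2)
  | [] => 1
  | p :: L => FreeMonoid.of p.1 * wordOf L

lemma toList_pow_of (i : Fin 2) (a : ℕ) :
    (FreeMonoid.of i ^ a).toList = List.replicate a i := by
  induction a with
  | zero => simp
  | succ a ih =>
    rw [pow_succ, FreeMonoid.toList_mul, ih, FreeMonoid.toList_of, List.replicate_succ']

lemma wordOf_toList : ∀ L : List (Fin 2 × ℤ), (wordOf L).toList = L.map Prod.fst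
  | [] => rfl
  | p :: L => by
    rw [wordOf, FreeMonoid.toList_mul, FreeMonoid.toList_of, wordOf_toList L, List.map_cons]
    rfl

lemma blockProd_entries_le : ∀ (L : List (Fin 2 × ℤ)) (as : List ℕ),
    as.length = L.length →
    List.IsChain (· ≠ ·) (blockProd L as).toList → ∀ x ∈ as, x ≤ 1 := by
  intro L
  induction L with
  | nil =>
    intro as h _ x hx
    rw [List.length_nil, List.length_eq_zero_iff] at h
    subst h; simp at hx
  | cons q L ih =>
    intro as h hc x hx
    rcases as with _ | ⟨a, as⟩
    · simp at hx
    · rw [blockProd_cons, FreeMonoid.toList_mul, toList_pow_of] at hc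
      rcases List.mem_cons.1 hx with rfl | hx'
      · by_contra hgt
        obtain ⟨k, rfl⟩ : ∃ k, x = k + 2 := ⟨x - 2, by omega⟩
        rw [List.replicate_succ, List.replicate_succ, List.cons_append, List.cons_append,
          List.isChain_cons_cons] at hc
        exact hc.1 rfl
      · exact ih as (by simpa using h) ((List.isChain_append.1 hc).2.1) x hx'

lemma supp_P (u : Fin 2 → NCSeries2ˣ) (hu : ∀ i, ((u i : NCSeries2)) = 1 + gen i) :
    ∀ (L : List (Fin 2 × ℤ)) (n : ℕ) (w : FreeMonoid (Fin 2)),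
    (cf n ((prodZ u L : NCSeries2))).coeff w ≠ 0 →
    ∃ as : List ℕ, as.length = L.length ∧ as.sum = n ∧ w = blockProd L as := by
  classical
  intro L
  induction L with
  | nil =>
    intro n w hw
    rw [prodZ_nil, Units.val_one, cf_one] at hw
    rcases Nat.eq_zero_or_pos n with rfl | hn
    · rw [if_pos rfl] at hw
      have hw1 : w = 1 := by
        by_contra hne
        apply hw
        rw [MonoidAlgebra.one_def, MonoidAlgebra.coeff_single_apply, if_neg (fun h => hne h.symm)]
      exact ⟨[], rfl, rfl, by rw [hw1, blockProd_nil]⟩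
    · rw [if_neg (by omega)] at hw
      simp at hw
  | cons q L ih =>
    intro n w hw
    rw [prodZ_cons, Units.val_mul] at hw
    simp only [cf] at hw
    rw [PowerSeries.coeff_mul, MonoidAlgebra.coeff_sum, Finsupp.finset_sum_apply] at hw
    obtain ⟨p, hp, hne⟩ := Finset.exists_ne_zero_of_sum_ne_zero hw
    obtain ⟨c, hc⟩ := (CP_zpow u hu q.1 q.2).2.2 p.1
    simp only [cf] at hc
    rw [hc, smul_mul_assoc, MonoidAlgebra.coeff_smul_apply] at hne
    have hne2 := right_ne_zero_of_smul hne
    have hw2 := MonoidAlgebra.support_coeff_single_mul_subset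
      (PowerSeries.coeff (R := FreeAlg2) p.2 ((prodZ u L : NCSeries2))) 1 (FreeMonoid.of q.1 ^ p.1)
      (Finsupp.mem_support_iff.2 hne2)
    obtain ⟨v, hv, hvw⟩ := Finset.mem_image.1 hw2
    obtain ⟨as, hlen, hsum, hbp⟩ := ih p.2 v (Finsupp.mem_support_iff.1 hv)
    refine ⟨p.1 :: as, by simp [hlen], ?_, ?_⟩
    · have := Finset.HasAntidiagonal.mem_antidiagonal.1 hp
      simp [hsum, this]
    · rw [blockProd_cons, ← hbp, hvw]

lemma coeff_P (u : Fin 2 → NCSeries2ˣ) (hu : ∀ i, ((u i : NCSeries2)) = 1 + gen i) :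
    ∀ (L : List (Fin 2 × ℤ)),
    List.IsChain (fun p q => p.1 ≠ q.1) L →
    (cf L.length ((prodZ u L : NCSeries2))).coeff (wordOf L) = (L.map Prod.snd).prod := by
  classical
  intro L
  induction L with
  | nil =>
    intro _
    rw [prodZ_nil, Units.val_one, cf_one]
    simp [wordOf, MonoidAlgebra.one_def]
  | cons q L ih =>
    intro hL
    rw [prodZ_cons, Units.val_mul]
    simp only [cf]
    rw [PowerSeries.coeff_mul, MonoidAlgebra.coeff_sum, Finsupp.finset_sum_apply]
    have hmem : ((1 : ℕ), L.length) ∈ Finset.HasAntidiagonal.antidiagonal ((q :: L).length) := by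
      rw [Finset.HasAntidiagonal.mem_antidiagonal, List.length_cons]; omega
    have hside : ∀ p ∈ Finset.HasAntidiagonal.antidiagonal ((q :: L).length), p ≠ ((1 : ℕ), L.length) →
        (PowerSeries.coeff (R := FreeAlg2) p.1 ((u q.1 ^ q.2 : NCSeries2ˣ) : NCSeries2) *
          PowerSeries.coeff (R := FreeAlg2) p.2 ((prodZ u L : NCSeries2))).coeff (wordOf (q :: L)) = 0 := by
      intro p hp hpne
      by_contra hne0
      obtain ⟨c, hc⟩ := (CP_zpow u hu q.1 q.2).2.2 p.1
      simp only [cf] at hc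
      rw [hc, smul_mul_assoc, MonoidAlgebra.coeff_smul_apply] at hne0
      have hne2 := right_ne_zero_of_smul hne0
      have hw2 := MonoidAlgebra.support_coeff_single_mul_subset
        (PowerSeries.coeff (R := FreeAlg2) p.2 ((prodZ u L : NCSeries2))) 1 (FreeMonoid.of q.1 ^ p.1)
        (Finsupp.mem_support_iff.2 hne2)
      obtain ⟨v, hv, hvw⟩ := Finset.mem_image.1 hw2
      obtain ⟨as, hlen, hsum, hbp⟩ := supp_P u hu L p.2 v (Finsupp.mem_support_iff.1 hv)
      have hwe : blockProd (q :: L) (p.1 :: as) = wordOf (q :: L) := by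
        rw [blockProd_cons, ← hbp]; exact hvw
      have hchain : List.IsChain (· ≠ ·) (wordOf (q :: L)).toList := by
        rw [wordOf_toList]
        exact (List.isChain_map Prod.fst).2 hL
      rw [← hwe] at hchain
      have hle := blockProd_entries_le (q :: L) (p.1 :: as) (by simp [hlen]) hchain
      have ha1 : p.1 ≤ 1 := hle p.1 List.mem_cons_self
      have hsle : as.sum ≤ as.length := by
        have := List.sum_le_card_nsmul as 1 (fun x hx => hle x (List.mem_cons_of_mem _ hx))
        simpa using this
      have hadd := Finset.HasAntidiagonal.mem_antidiagonal.1 hp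
      rw [List.length_cons] at hadd
      apply hpne
      have h1 : p.1 = 1 := by omega
      have h2 : p.2 = L.length := by omega
      exact Prod.ext h1 h2
    rw [Finset.sum_eq_single_of_mem _ hmem hside]
    obtain ⟨c0, c1, _⟩ := CP_zpow u hu q.1 q.2
    simp only [cf] at c1
    rw [c1, smul_mul_assoc, MonoidAlgebra.coeff_smul_apply]
    have hcancel : ∀ a : FreeMonoid (Fin 2),
        FreeMonoid.of q.1 * a = FreeMonoid.of q.1 * wordOf L ↔ a = wordOf L :=
      fun a => mul_left_cancel_iff
    have happ := MonoidAlgebra.coeff_single_mul_eq_mul_coeff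
      (x := PowerSeries.coeff (R := FreeAlg2) L.length ((prodZ u L : NCSeries2)))
      (r := (1 : ℤ)) (wordOf L) (fun a _ => hcancel a)
    rw [show wordOf (q :: L) = FreeMonoid.of q.1 * wordOf L from rfl]
    simp only [mon]
    rw [happ, one_mul]
    have := ih hL.tail
    simp only [cf] at this
    rw [this, List.map_cons, List.prod_cons, smul_eq_mul]

def expo (b : Bool) : ℤ := cond b 1 (-1)

lemma expo_ne_zero (b : Bool) : expo b ≠ 0 := by cases b <;> simp [expo]

lemma expo_mul_expo (b : Bool) : 0 < expo b * expo b := by cases b <;> simp [expo]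

lemma cond_eq_zpow (x : NCSeries2ˣ) (b : Bool) :
    (cond b x x⁻¹) = x ^ expo b := by
  cases b <;> simp [expo]

def blocks : List (Fin 2 × Bool) → List (Fin 2 × ℤ)
  | [] => []
  | (i, b) :: l =>
    match blocks l with
    | [] => [(i, expo b)]
    | (j, e) :: r => if i = j then (i, expo b + e) :: r else (i, expo b) :: (j, e) :: r

lemma blocks_cons_eq (i : Fin 2) (b : Bool) (l : List (Fin 2 × Bool)) :
    blocks ((i, b) :: l) =
      match blocks l with
      | [] => [(i, expo b)]
      | (j, e) :: r => if i = j then (i, expo b + e) :: r else (i, expo b) :: (j, e) :: r := by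
  simp only [blocks]

noncomputable def prodBool (u : Fin 2 → NCSeries2ˣ) (l : List (Fin 2 × Bool)) : NCSeries2ˣ :=
  (l.map fun x => cond x.2 (u x.1) (u x.1)⁻¹).prod

lemma prodBool_nil (u : Fin 2 → NCSeries2ˣ) : prodBool u [] = 1 := by simp [prodBool]

lemma prodBool_cons (u : Fin 2 → NCSeries2ˣ) (p : Fin 2 × Bool) (l : List (Fin 2 × Bool)) :
    prodBool u (p :: l) = u p.1 ^ expo p.2 * prodBool u l := by
  simp [prodBool, cond_eq_zpow]

lemma blocks_spec (u : Fin 2 → NCSeries2ˣ) : ∀ l : List (Fin 2 × Bool),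
    List.IsChain (fun a b => a.1 = b.1 → a.2 = b.2) l →
    List.IsChain (fun p q : Fin 2 × ℤ => p.1 ≠ q.1) (blocks l) ∧
    (∀ p ∈ blocks l, p.2 ≠ 0) ∧
    prodZ u (blocks l) = prodBool u l ∧
    (∀ i b l', l = (i, b) :: l' → ∃ e r, blocks l = (i, e) :: r ∧ 0 < expo b * e) := by
  intro l
  induction l with
  | nil =>
    intro _
    refine ⟨by simp [blocks], by simp [blocks], ?_, ?_⟩
    · rw [show blocks [] = [] from rfl, prodZ_nil, prodBool_nil]
    · intro i b l' h; cases h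
  | cons p l ih =>
    intro hl
    obtain ⟨i, b⟩ := p
    obtain ⟨ihc, ihnz, ihprod, ihhead⟩ := ih hl.tail
    cases hB : blocks l with
    | nil =>
      have hbl : blocks ((i, b) :: l) = [(i, expo b)] := by
        rw [blocks_cons_eq, hB]
      refine ⟨by rw [hbl]; simp, ?_, ?_, ?_⟩
      · intro p hp
        rw [hbl, List.mem_singleton] at hp
        rw [hp]
        exact expo_ne_zero b
      · rw [hbl, prodZ_cons, prodZ_nil, prodBool_cons]
        rw [hB, prodZ_nil] at ihprod
        rw [← ihprod]
      · intro i' b' l' heq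
        injection heq with h1 h2
        injection h1 with hi hb
        subst hi; subst hb
        exact ⟨expo b, [], hbl, expo_mul_expo b⟩
    | cons qe r =>
      obtain ⟨j, e'⟩ := qe
      by_cases hij : i = j
      · subst hij
        rcases l with _ | ⟨q0, l''⟩
        · rw [show blocks [] = [] from rfl] at hB; cases hB
        · obtain ⟨e0, r0, hb0, hsign0⟩ := ihhead q0.1 q0.2 l'' (by simp)
          rw [hb0] at hB
          injection hB with h1 h2
          injection h1 with hq1 he0
          subst h2
          subst he0
          have hb2 : b = q0.2 := by
            have hrel := (List.isChain_cons_cons.1 hl).1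
            exact hrel hq1.symm
          have hsign : 0 < expo b * e0 := by
            rw [hb2]
            exact hsign0
          have hbl : blocks ((i, b) :: q0 :: l'') = (i, expo b + e0) :: r0 := by
            have hstep : blocks ((i, b) :: q0 :: l'') =
                if i = q0.1 then (i, expo b + e0) :: r0
                else (i, expo b) :: (q0.1, e0) :: r0 := by
              rw [blocks_cons_eq, hb0]
            rw [hstep, if_pos hq1.symm]
          have hse : 0 < expo b * (expo b + e0) := by
            cases b <;> simp [expo] at hsign ⊢ <;> omega
          refine ⟨?_, ?_, ?_, ?_⟩
          · rw [hbl]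
            rw [hb0, hq1] at ihc
            rcases r0 with _ | ⟨r1, r'⟩
            · simp
            · rw [List.isChain_cons_cons] at ihc ⊢
              exact ⟨ihc.1, ihc.2⟩
          · intro p hp
            rw [hbl, List.mem_cons] at hp
            rcases hp with rfl | hp
            · intro h0
              have h0' : expo b + e0 = 0 := h0
              rw [h0', mul_zero] at hse
              exact lt_irrefl 0 hse
            · refine ihnz p ?_
              rw [hb0]
              exact List.mem_cons_of_mem _ hp
          · rw [hbl, prodZ_cons, prodBool_cons]
            rw [hb0, prodZ_cons] at ihprod
            dsimp only at ihprod ⊢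
            rw [hq1] at ihprod
            rw [zpow_add, mul_assoc, ihprod]
          · intro i' b' l' heq
            injection heq with h1 h2
            injection h1 with hi hb
            subst hi; subst hb
            exact ⟨expo b + e0, r0, hbl, hse⟩
      · have hbl : blocks ((i, b) :: l) = (i, expo b) :: (j, e') :: r := by
          have hstep : blocks ((i, b) :: l) =
              if i = j then (i, expo b + e') :: r
              else (i, expo b) :: (j, e') :: r := by
            rw [blocks_cons_eq, hB]
          rw [hstep, if_neg hij]
        refine ⟨?_, ?_, ?_, ?_⟩
        · rw [hbl, List.isChain_cons_cons]
          rw [hB] at ihc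
          exact ⟨hij, ihc⟩
        · intro p hp
          rw [hbl, List.mem_cons] at hp
          rcases hp with rfl | hp
          · exact expo_ne_zero b
          · refine ihnz p ?_
            rw [hB]
            exact hp
        · rw [hbl, prodZ_cons, prodBool_cons]
          rw [hB] at ihprod
          dsimp only at ihprod ⊢
          rw [ihprod]
        · intro i' b' l' heq
          injection heq with h1 h2
          injection h1 with hi hb
          subst hi; subst hb
          exact ⟨expo b, (j, e') :: r, hbl, expo_mul_expo b⟩

lemma chain_of_no_cancel : ∀ l : List (Fin 2 × Bool),
    (∀ (l1 l2 : List (Fin 2 × Bool)) (x : Fin 2) (b : Bool), l ≠ l1 ++ (x, b) :: (x, !b) :: l2) →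
    List.IsChain (fun a b => a.1 = b.1 → a.2 = b.2) l := by
  intro l
  induction l with
  | nil => intro _; simp
  | cons a l ih =>
    intro h
    rcases l with _ | ⟨c, t⟩
    · simp
    · obtain ⟨aa, ab⟩ := a
      obtain ⟨ca, cb⟩ := c
      rw [List.isChain_cons_cons]
      constructor
      · intro hfst
        by_contra hsnd
        have hcb : cb = !ab := by
          cases ab <;> cases cb <;> simp_all
        have hca : aa = ca := hfst
        exact h [] t aa ab (by rw [← hca, hcb]; rfl)
      · exact ih fun l1 l2 x b hl =>
          h ((aa, ab) :: l1) l2 x b (by rw [List.cons_append, ← hl])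

end MagnusProof

open MagnusProof

/-- Magnus embedding: any group homomorphism from the free group on two
generators into the units of ℤ⟨⟨s,t⟩⟩ sending the generators `x, y` to
`1 + s` and `1 + t` respectively is injective. -/
theorem stmt_9 (φ : FreeGroup (Fin 2) →* NCSeries2ˣ)
    (hφ : ∀ i : Fin 2, (φ (FreeGroup.of i) : NCSeries2) = 1 + gen i) :
    Function.Injective φ := by
  classical
  rw [injective_iff_map_eq_one]
  intro w hw
  by_contra hne
  set u : Fin 2 → NCSeries2ˣ := fun i => φ (FreeGroup.of i) with hudef
  have hu : ∀ i, ((u i : NCSeries2)) = 1 + gen i := hφ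
  have hlift : φ w = prodBool u (FreeGroup.toWord w) := by
    have h1 : φ w = FreeGroup.lift u w := FreeGroup.lift_unique φ (fun x => rfl)
    rw [h1]
    conv_lhs => rw [← FreeGroup.mk_toWord (x := w)]
    rw [FreeGroup.lift_mk]
    rfl
  have hred : List.IsChain (fun a b : Fin 2 × Bool => a.1 = b.1 → a.2 = b.2)
      (FreeGroup.toWord w) := by
    apply chain_of_no_cancel
    intro l1 l2 x b heq
    exact FreeGroup.reduce.not ((FreeGroup.reduce_toWord w).trans heq)
  obtain ⟨hchain, hnz, hprod, hhead⟩ := blocks_spec u (FreeGroup.toWord w) hred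
  have hlnil : FreeGroup.toWord w ≠ [] := by
    rw [ne_eq, FreeGroup.toWord_eq_nil_iff]
    exact hne
  obtain ⟨p, l', hpl⟩ : ∃ p l', FreeGroup.toWord w = p :: l' := by
    rcases hl : FreeGroup.toWord w with _ | ⟨p, l'⟩
    · exact absurd hl hlnil
    · exact ⟨p, l', rfl⟩
  obtain ⟨e, r, hbl, _⟩ := hhead p.1 p.2 l' (by rw [hpl])
  have hone : ((prodZ u (blocks (FreeGroup.toWord w)) : NCSeries2ˣ) : NCSeries2) = 1 := by
    rw [hprod, ← hlift, hw, Units.val_one]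
  have hcoeff := coeff_P u hu (blocks (FreeGroup.toWord w)) hchain
  rw [hone, cf_one, if_neg (by rw [hbl]; simp)] at hcoeff
  have hzero : ((0 : FreeAlg2)).coeff (wordOf (blocks (FreeGroup.toWord w))) = 0 := rfl
  rw [hzero] at hcoeff
  have hprodne : ((blocks (FreeGroup.toWord w)).map Prod.snd).prod ≠ 0 := by
    apply List.prod_ne_zero
    intro h0
    obtain ⟨p', hp', hp'0⟩ := List.mem_map.1 h0
    exact hnz p' hp' hp'0
  exact hprodne hcoeff.symm
end
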